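/- For every θ ∈ (0, π/2], let 𝔄_θ = { r·e^{it} ∈ ℂ : 0 < t < θ, 0 < r < sin(θ−t)/sin θ } be the plane region bounded by the segment [0,1] and the circular arc α(t) = (sin(θ−t)/sin θ)·e^{it}, t ∈ [0,θ]. Then ∬_{𝔄_θ} 4/(1+|z|²)² dm(z) = 2θ − sin θ · ζ₀(sin θ), where m is Lebesgue measure on ℂ. Equivalently, the spherical area of 𝔄_θ equals ζ₁(sin θ), where ζ₁(τ) = 2·arcsin τ − τ·ζ₀(τ). -/

import Mathlib

open Real Set MeasureTheory

/-- The function `ζ₀(τ)` of the paper. -/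
noncomputable def zeta0 (τ : ℝ) : ℝ :=
  2 / Real.sqrt (1 + τ^2) *
    (π/2 - Real.arctan (Real.sqrt (1 - τ^2) / Real.sqrt (1 + τ^2)))

/-- The function `ζ₁(τ) = 2 arcsin τ − τ ζ₀(τ)` of the paper. -/
noncomputable def zeta1 (τ : ℝ) : ℝ := 2 * Real.arcsin τ - τ * zeta0 τ

/-- The plane region `𝔄_θ` bounded by the segment `[0,1]` and the circular arc
`α(t) = (sin(θ−t)/sin θ)·e^{it}`, `t ∈ [0,θ]`. -/
def lensRegion (θ : ℝ) : Set ℂ :=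
  {z : ℂ | ∃ t r : ℝ, 0 < t ∧ t < θ ∧ 0 < r ∧ r < Real.sin (θ - t) / Real.sin θ ∧
    z = (r : ℂ) * Complex.exp (t * Complex.I)}

namespace LensAux

/-- Radius bound. -/
noncomputable def Rf (θ t : ℝ) : ℝ := Real.sin (θ - t) / Real.sin θ

/-- Polar-coordinate description of the lens region. -/
def S (θ : ℝ) : Set (ℝ × ℝ) :=
  {p : ℝ × ℝ | 0 < p.1 ∧ p.1 < Rf θ p.2 ∧ 0 < p.2 ∧ p.2 < θ}

lemma isOpen_S (θ : ℝ) : IsOpen (S θ) := by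
  have hcont : Continuous fun p : ℝ × ℝ => Rf θ p.2 :=
    ((Real.continuous_sin.comp (continuous_const.sub continuous_snd)).div_const _)
  have h1 : IsOpen {p : ℝ × ℝ | 0 < p.1} := isOpen_lt continuous_const continuous_fst
  have h2 : IsOpen {p : ℝ × ℝ | p.1 < Rf θ p.2} := isOpen_lt continuous_fst hcont
  have h3 : IsOpen {p : ℝ × ℝ | 0 < p.2} := isOpen_lt continuous_const continuous_snd
  have h4 : IsOpen {p : ℝ × ℝ | p.2 < θ} := isOpen_lt continuous_snd continuous_const
  have : S θ = ({p : ℝ × ℝ | 0 < p.1} ∩ {p | p.1 < Rf θ p.2}) ∩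
      ({p : ℝ × ℝ | 0 < p.2} ∩ {p | p.2 < θ}) := by
    ext p; simp only [S, mem_setOf_eq, mem_inter_iff]; tauto
  rw [this]; exact (h1.inter h2).inter (h3.inter h4)

lemma lens_eq {θ : ℝ} (hθ : θ ∈ Set.Ioc (0:ℝ) (π/2)) :
    lensRegion θ = Complex.polarCoord.source ∩ Complex.polarCoord ⁻¹' (S θ) := by
  obtain ⟨hθ0, hθπ⟩ := hθ
  ext z
  constructor
  · rintro ⟨t, r, ht0, htθ, hr0, hrR, rfl⟩
    have hsin : 0 < Real.sin t :=
      Real.sin_pos_of_pos_of_lt_pi ht0 (lt_of_lt_of_le htθ (by linarith [Real.pi_pos]))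
    have hz : (r : ℂ) * Complex.exp (t * Complex.I)
        = (r : ℂ) * (Complex.cos t + Complex.sin t * Complex.I) := by
      rw [Complex.exp_mul_I]
    have htmem : t ∈ Set.Ioc (-π) π := by
      constructor
      · linarith [Real.pi_pos]
      · linarith [Real.pi_pos, hθπ, htθ]
    have harg : Complex.arg ((r : ℂ) * Complex.exp (t * Complex.I)) = t := by
      rw [hz]; exact Complex.arg_mul_cos_add_sin_mul_I hr0 htmem
    have habs : ‖((r : ℂ) * Complex.exp (t * Complex.I))‖ = r := by
      rw [norm_mul, Complex.norm_exp_ofReal_mul_I, Complex.norm_real, Real.norm_eq_abs,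
        abs_of_pos hr0, mul_one]
    constructor
    · rw [Complex.polarCoord_source, Complex.mem_slitPlane_iff]
      right
      rw [hz, ← Complex.ofReal_cos, ← Complex.ofReal_sin]
      simp only [Complex.add_im, Complex.mul_im, Complex.ofReal_re, Complex.ofReal_im]
      simp only [Complex.ofReal_re, Complex.ofReal_im, Complex.mul_re, Complex.I_re,
        Complex.I_im, Complex.add_re]
      nlinarith [mul_pos hr0 hsin]
    · show Complex.polarCoord _ ∈ S θ
      rw [Complex.polarCoord_apply, harg, habs]
      exact ⟨hr0, hrR, ht0, htθ⟩
  · rintro ⟨hzs, hzS⟩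
    rw [mem_preimage, Complex.polarCoord_apply] at hzS
    obtain ⟨h1, h2, h3, h4⟩ := hzS
    exact ⟨Complex.arg z, ‖z‖, h3, h4, h1, h2,
      (Complex.norm_mul_exp_arg_mul_I z).symm⟩

lemma measurableSet_lens {θ : ℝ} (hθ : θ ∈ Set.Ioc (0:ℝ) (π/2)) :
    MeasurableSet (lensRegion θ) := by
  rw [lens_eq hθ]
  exact (Complex.polarCoord.isOpen_inter_preimage (isOpen_S θ)).measurableSet

lemma S_subset_target {θ : ℝ} (hθ : θ ∈ Set.Ioc (0:ℝ) (π/2)) :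
    S θ ⊆ Complex.polarCoord.target := by
  rintro ⟨r, t⟩ ⟨h1, h2, h3, h4⟩
  rw [Complex.polarCoord_target]
  refine ⟨h1, ?_, ?_⟩
  · simp only [mem_Ioo] at *
    linarith [Real.pi_pos]
  · have := hθ.2
    simp only at *
    linarith [Real.pi_pos]

lemma integral_lens_eq_S {θ : ℝ} (hθ : θ ∈ Set.Ioc (0:ℝ) (π/2)) :
    (∫ z in lensRegion θ, 4 / (1 + ‖z‖^2)^2)
      = ∫ p in S θ, p.1 * (4 / (1 + p.1^2)^2) := by
  have hms := measurableSet_lens hθ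
  rw [← integral_indicator hms,
    ← Complex.integral_comp_polarCoord_symm
      (fun z => Set.indicator (lensRegion θ) (fun z => 4 / (1 + ‖z‖^2)^2) z)]
  have key : ∀ p ∈ Complex.polarCoord.target,
      (Complex.polarCoord.symm p ∈ lensRegion θ ↔ p ∈ S θ) := by
    intro p hp
    rw [lens_eq hθ]
    constructor
    · rintro ⟨-, h⟩
      rwa [mem_preimage, Complex.polarCoord.right_inv hp] at h
    · intro h
      exact ⟨Complex.polarCoord.map_target hp,
        by rwa [mem_preimage, Complex.polarCoord.right_inv hp]⟩
  have congr1 : ∀ p ∈ Complex.polarCoord.target,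
      p.1 • Set.indicator (lensRegion θ) (fun z => 4 / (1 + ‖z‖^2)^2)
          (Complex.polarCoord.symm p)
        = Set.indicator (S θ) (fun p : ℝ × ℝ => p.1 * (4 / (1 + p.1^2)^2)) p := by
    intro p hp
    by_cases hmem : p ∈ S θ
    · rw [Set.indicator_of_mem hmem,
        Set.indicator_of_mem ((key p hp).2 hmem), smul_eq_mul]
      have habs : ‖Complex.polarCoord.symm p‖ = p.1 := by
        rw [Complex.norm_polarCoord_symm, abs_of_pos hmem.1]
      rw [habs]
    · rw [Set.indicator_of_notMem hmem,
        Set.indicator_of_notMem (fun h => hmem ((key p hp).1 h)), smul_zero]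
  have htarg : polarCoord.target = Complex.polarCoord.target := rfl
  rw [htarg, setIntegral_congr_fun Complex.polarCoord.open_target.measurableSet congr1,
    setIntegral_indicator (isOpen_S θ).measurableSet,
    Set.inter_eq_self_of_subset_right (S_subset_target hθ)]

lemma sin_theta_pos {θ : ℝ} (hθ : θ ∈ Set.Ioc (0:ℝ) (π/2)) : 0 < Real.sin θ :=
  Real.sin_pos_of_pos_of_lt_pi hθ.1 (lt_of_le_of_lt hθ.2 (by linarith [Real.pi_pos]))

lemma Rf_le_one {θ : ℝ} (hθ : θ ∈ Set.Ioc (0:ℝ) (π/2)) {t : ℝ} (ht : t ∈ Set.Ioo 0 θ) :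
    Rf θ t ≤ 1 := by
  rw [Rf, div_le_one (sin_theta_pos hθ)]
  apply Real.strictMonoOn_sin.monotoneOn
  · constructor <;> [linarith [Real.pi_pos, ht.2]; linarith [hθ.2, ht.1]]
  · constructor <;> [linarith [Real.pi_pos, hθ.1]; exact hθ.2]
  · linarith [ht.1]

lemma integral_S_eq_iterated {θ : ℝ} (hθ : θ ∈ Set.Ioc (0:ℝ) (π/2)) :
    (∫ p in S θ, p.1 * (4 / (1 + p.1^2)^2))
      = ∫ t in Set.Ioo 0 θ, ∫ r in Set.Ioo 0 (Rf θ t), r * (4 / (1 + r^2)^2) := by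
  set F : ℝ × ℝ → ℝ := Set.indicator (S θ) (fun p => p.1 * (4 / (1 + p.1^2)^2)) with hF
  have hFmeas : Measurable F := by
    apply Measurable.indicator
    · exact measurable_fst.mul
        ((measurable_const.div (((measurable_fst.pow_const 2).const_add 1).pow_const 2)))
    · exact (isOpen_S θ).measurableSet
  have hsub : S θ ⊆ Set.Ioo (0:ℝ) 1 ×ˢ Set.Ioo 0 θ := by
    rintro ⟨r, t⟩ ⟨h1, h2, h3, h4⟩
    exact ⟨⟨h1, lt_of_lt_of_le h2 (Rf_le_one hθ ⟨h3, h4⟩)⟩, h3, h4⟩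
  have hGint : Integrable (Set.indicator (Set.Ioo (0:ℝ) 1 ×ˢ Set.Ioo 0 θ)
      (fun _ => (4:ℝ))) := by
    rw [integrable_indicator_iff (measurableSet_Ioo.prod measurableSet_Ioo)]
    rw [integrableOn_const_iff]
    right
    rw [Measure.volume_eq_prod, Measure.prod_prod, Real.volume_Ioo, Real.volume_Ioo]
    exact ENNReal.mul_lt_top ENNReal.ofReal_lt_top ENNReal.ofReal_lt_top
  have hFint : Integrable F := by
    apply hGint.mono' hFmeas.aestronglyMeasurable
    filter_upwards with p
    by_cases hp : p ∈ S θ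
    · rw [hF, Set.indicator_of_mem hp, Set.indicator_of_mem (hsub hp)]
      obtain ⟨h1, h2, h3, h4⟩ := hp
      have hr1 : p.1 < 1 := lt_of_lt_of_le h2 (Rf_le_one hθ ⟨h3, h4⟩)
      have h5 : (1:ℝ) ≤ (1 + p.1^2)^2 := by nlinarith
      have h6 : 4 / (1 + p.1^2)^2 ≤ 4 := by
        rw [div_le_iff₀ (by nlinarith)]; nlinarith
      rw [Real.norm_eq_abs, abs_of_nonneg (by positivity)]
      nlinarith [div_nonneg (by norm_num : (0:ℝ) ≤ 4) (le_trans zero_le_one h5)]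
    · rw [hF, Set.indicator_of_notMem hp]
      simp only [norm_zero]
      exact Set.indicator_nonneg (fun _ _ => by norm_num) _
  rw [← integral_indicator (isOpen_S θ).measurableSet, ← hF]
  rw [Measure.volume_eq_prod] at hFint ⊢
  rw [integral_prod_symm F hFint]
  have hpt : ∀ t : ℝ, (∫ r, F (r, t))
      = Set.indicator (Set.Ioo 0 θ)
          (fun t => ∫ r in Set.Ioo 0 (Rf θ t), r * (4 / (1 + r^2)^2)) t := by
    intro t
    by_cases ht : t ∈ Set.Ioo 0 θ
    · rw [Set.indicator_of_mem ht, ← integral_indicator measurableSet_Ioo]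
      congr 1
      ext r
      simp only [hF, Set.indicator_apply, S, mem_setOf_eq, mem_Ioo, ht.1, ht.2,
        and_true]
    · rw [Set.indicator_of_notMem ht]
      have hz : ∀ r : ℝ, F (r, t) = 0 := fun r =>
        Set.indicator_of_notMem (fun h => ht ⟨h.2.2.1, h.2.2.2⟩) _
      simp [hz]
  rw [integral_congr_ae (Filter.Eventually.of_forall hpt),
    integral_indicator measurableSet_Ioo]

lemma hasDerivAt_phi (r : ℝ) :
    HasDerivAt (fun r : ℝ => 2 - 2 / (1 + r^2)) (r * (4 / (1 + r^2)^2)) r := by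
  have hne : (1 + r^2) ≠ 0 := by positivity
  have h1 : HasDerivAt (fun r : ℝ => 1 + r^2) (2*r) r := by
    simpa using (hasDerivAt_pow 2 r).const_add 1
  have h2 : HasDerivAt (fun r : ℝ => 2 / (1 + r^2))
      ((0 * (1 + r^2) - 2 * (2*r)) / (1 + r^2)^2) r :=
    (hasDerivAt_const r (2:ℝ)).div h1 hne
  have h3 := (hasDerivAt_const r (2:ℝ)).sub h2
  convert h3 using 1 <;> try rfl
  field_simp
  ring

lemma inner_integral {θ : ℝ} (hθ : θ ∈ Set.Ioc (0:ℝ) (π/2)) {t : ℝ}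
    (ht : t ∈ Set.Ioo 0 θ) :
    (∫ r in Set.Ioo 0 (Rf θ t), r * (4 / (1 + r^2)^2))
      = 2 - 2 * Real.sin θ ^ 2 / (Real.sin θ ^ 2 + Real.sin (θ - t) ^ 2) := by
  have hsθ := sin_theta_pos hθ
  have hsθt : 0 < Real.sin (θ - t) :=
    Real.sin_pos_of_pos_of_lt_pi (by linarith [ht.2])
      (by linarith [ht.1, hθ.2, Real.pi_pos])
  have hR : 0 < Rf θ t := div_pos hsθt hsθ
  have hcont : Continuous (fun r : ℝ => r * (4 / (1 + r^2)^2)) := by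
    apply continuous_id.mul
    apply continuous_const.div
    · continuity
    · intro x; positivity
  have hFTC : (∫ r in (0:ℝ)..(Rf θ t), r * (4 / (1 + r^2)^2))
      = (2 - 2 / (1 + (Rf θ t)^2)) - (2 - 2 / (1 + (0:ℝ)^2)) := by
    exact intervalIntegral.integral_eq_sub_of_hasDerivAt
      (f := fun r : ℝ => 2 - 2 / (1 + r^2)) (fun x _ => hasDerivAt_phi x)
      (hcont.intervalIntegrable _ _)
  rw [← integral_Ioc_eq_integral_Ioo, ← intervalIntegral.integral_of_le hR.le, hFTC]
  have hRR : 1 + (Rf θ t)^2 = (Real.sin θ ^ 2 + Real.sin (θ - t) ^ 2) / Real.sin θ ^ 2 := by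
    rw [Rf]
    field_simp
  rw [hRR]
  have hden : (0:ℝ) < Real.sin θ ^ 2 + Real.sin (θ - t) ^ 2 := by positivity
  field_simp
  ring

lemma outer_integral {θ : ℝ} (hθ : θ ∈ Set.Ioc (0:ℝ) (π/2)) :
    (∫ t in Set.Ioo 0 θ,
        (2 - 2 * Real.sin θ ^ 2 / (Real.sin θ ^ 2 + Real.sin (θ - t) ^ 2)))
      = 2 * θ - Real.sin θ * zeta0 (Real.sin θ) := by
  set τ := Real.sin θ with hτdef
  have hτ : 0 < τ := sin_theta_pos hθ
  set q := Real.sqrt (1 + τ^2) with hqdef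
  have hq : 0 < q := Real.sqrt_pos.2 (by positivity)
  have hq2 : q^2 = 1 + τ^2 := Real.sq_sqrt (by positivity)
  set H : ℝ → ℝ := fun t => 2*t + (2*τ/q) *
      (π/2 - Real.arctan (τ * Real.cos (θ - t) / (q * Real.sin (θ - t)))) with hHdef
  set f' : ℝ → ℝ := fun t => 2 - 2 * τ ^ 2 / (τ ^ 2 + Real.sin (θ - t) ^ 2) with hf'def
  have hf'cont : Continuous f' := by
    apply continuous_const.sub
    apply continuous_const.div
    · continuity
    · intro x; positivity
  -- derivative of H on the open interval
  have hderiv : ∀ t ∈ Set.Ioo (0:ℝ) θ, HasDerivAt H (f' t) t := by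
    intro t ht
    have hsθt : 0 < Real.sin (θ - t) :=
      Real.sin_pos_of_pos_of_lt_pi (by linarith [ht.2])
        (by linarith [ht.1, hθ.2, Real.pi_pos])
    have hvne : q * Real.sin (θ - t) ≠ 0 := by positivity
    have hlin : HasDerivAt (fun t : ℝ => θ - t) (-1) t := by
      simpa using (hasDerivAt_id t).const_sub θ
    have hu : HasDerivAt (fun t : ℝ => τ * Real.cos (θ - t))
        (τ * (-Real.sin (θ - t) * -1)) t := (hlin.cos).const_mul τ
    have hv : HasDerivAt (fun t : ℝ => q * Real.sin (θ - t))
        (q * (Real.cos (θ - t) * -1)) t := (hlin.sin).const_mul q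
    have hquot := hu.div hv hvne
    have harc := hquot.arctan
    have hH := ((hasDerivAt_id t).const_mul (2:ℝ)).add
      ((harc.const_sub (π/2)).const_mul (2*τ/q))
    convert hH using 1 <;> try rfl
    have hcs : Real.cos (θ - t) ^ 2 = 1 - Real.sin (θ - t) ^ 2 := Real.cos_sq' _
    have hden : (0:ℝ) < τ^2 + Real.sin (θ - t) ^ 2 := by positivity
    rw [hf'def]
    simp only [Pi.div_apply]
    field_simp
    linear_combination (τ^2*Real.sin (θ-t)^2) * hcs
      - (τ^2*Real.sin (θ-t)^2) * hq2
  -- limit at the left endpoint 0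
  have hconta : ContinuousAt H 0 := by
    have hne : q * Real.sin (θ - 0) ≠ 0 := by
      rw [sub_zero]; positivity
    apply (continuousAt_id.const_mul 2).add
    apply ContinuousAt.mul continuousAt_const
    apply ContinuousAt.sub continuousAt_const
    apply Real.continuous_arctan.continuousAt.comp
    exact ((continuousAt_const.mul
      ((Real.continuous_cos.continuousAt).comp
        ((continuousAt_const.sub continuousAt_id)))).div
      ((continuousAt_const.mul
        ((Real.continuous_sin.continuousAt).comp
          ((continuousAt_const.sub continuousAt_id))))) hne)
  have hH0 : H 0 = τ * zeta0 τ := by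
    have hcosθ : Real.cos θ = Real.sqrt (1 - τ^2) := by
      rw [hτdef]
      exact Real.cos_eq_sqrt_one_sub_sin_sq (by linarith [hθ.1, Real.pi_pos]) hθ.2
    rw [hHdef]
    simp only [sub_zero]
    rw [hcosθ, zeta0]
    rw [show τ * Real.sqrt (1 - τ^2) / (q * τ) = Real.sqrt (1 - τ^2) / q by
      field_simp]
    ring
  have ha : Filter.Tendsto H (nhdsWithin 0 (Set.Ioi 0)) (nhds (τ * zeta0 τ)) := by
    rw [← hH0]
    exact hconta.tendsto.mono_left (nhdsWithin_le_nhds (s := Set.Ioi 0))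
  -- limit at the right endpoint θ
  have hb : Filter.Tendsto H (nhdsWithin θ (Set.Iio θ)) (nhds (2 * θ)) := by
    have hnum : Filter.Tendsto (fun t : ℝ => τ * Real.cos (θ - t))
        (nhdsWithin θ (Set.Iio θ)) (nhds τ) := by
      have : ContinuousAt (fun t : ℝ => τ * Real.cos (θ - t)) θ :=
        continuousAt_const.mul ((Real.continuous_cos.continuousAt).comp
          (continuousAt_const.sub continuousAt_id))
      have h1 := this.tendsto.mono_left (nhdsWithin_le_nhds (s := Set.Iio θ))
      simpa using h1
    have hdenpos : ∀ᶠ t in nhdsWithin θ (Set.Iio θ), 0 < q * Real.sin (θ - t) := by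
      filter_upwards [Ioo_mem_nhdsLT_of_mem (Set.right_mem_Ioc.2 hθ.1)] with t ht
      have : 0 < Real.sin (θ - t) :=
        Real.sin_pos_of_pos_of_lt_pi (by linarith [ht.2])
          (by linarith [ht.1, hθ.2, Real.pi_pos])
      positivity
    have hden0 : Filter.Tendsto (fun t : ℝ => q * Real.sin (θ - t))
        (nhdsWithin θ (Set.Iio θ)) (nhdsWithin 0 (Set.Ioi 0)) := by
      apply tendsto_nhdsWithin_of_tendsto_nhds_of_eventually_within
      · have : ContinuousAt (fun t : ℝ => q * Real.sin (θ - t)) θ :=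
          continuousAt_const.mul ((Real.continuous_sin.continuousAt).comp
            (continuousAt_const.sub continuousAt_id))
        have h1 := this.tendsto.mono_left (nhdsWithin_le_nhds (s := Set.Iio θ))
        simpa using h1
      · exact hdenpos
    have hinv : Filter.Tendsto (fun t : ℝ => (q * Real.sin (θ - t))⁻¹)
        (nhdsWithin θ (Set.Iio θ)) Filter.atTop :=
      tendsto_inv_nhdsGT_zero.comp hden0
    have hfrac : Filter.Tendsto
        (fun t : ℝ => τ * Real.cos (θ - t) / (q * Real.sin (θ - t)))
        (nhdsWithin θ (Set.Iio θ)) Filter.atTop := by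
      simp only [div_eq_mul_inv]
      exact Filter.Tendsto.pos_mul_atTop hτ hnum hinv
    have harct : Filter.Tendsto
        (fun t : ℝ => Real.arctan (τ * Real.cos (θ - t) / (q * Real.sin (θ - t))))
        (nhdsWithin θ (Set.Iio θ)) (nhds (π/2)) :=
      (Real.tendsto_arctan_atTop.mono_right nhdsWithin_le_nhds).comp hfrac
    have hfull : Filter.Tendsto H (nhdsWithin θ (Set.Iio θ))
        (nhds (2*θ + (2*τ/q) * (π/2 - π/2))) := by
      apply Filter.Tendsto.add
      · have h2 : Filter.Tendsto (fun t : ℝ => 2 * t) (nhdsWithin θ (Set.Iio θ))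
            (nhds (2 * θ)) := by
          have hc : Continuous (fun t : ℝ => 2 * t) := continuous_const.mul continuous_id
          exact (hc.tendsto θ).mono_left (nhdsWithin_le_nhds (s := Set.Iio θ))
        exact h2
      · exact Filter.Tendsto.const_mul _ (Filter.Tendsto.const_sub _ harct)
    simpa using hfull
  have hFTC := intervalIntegral.integral_eq_sub_of_hasDerivAt_of_tendsto hθ.1
    hderiv (hf'cont.intervalIntegrable _ _) ha hb
  rw [← integral_Ioc_eq_integral_Ioo, ← intervalIntegral.integral_of_le hθ.1.le]
  rw [hFTC]

end LensAux

theorem lens_spherical_area (θ : ℝ) (hθ : θ ∈ Set.Ioc (0:ℝ) (π/2)) :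
    (∫ z in lensRegion θ, 4 / (1 + ‖z‖^2)^2)
      = 2 * θ - Real.sin θ * zeta0 (Real.sin θ) ∧
    (∫ z in lensRegion θ, 4 / (1 + ‖z‖^2)^2) = zeta1 (Real.sin θ) := by
  have h1 : (∫ z in lensRegion θ, 4 / (1 + ‖z‖^2)^2)
      = 2 * θ - Real.sin θ * zeta0 (Real.sin θ) := by
    rw [LensAux.integral_lens_eq_S hθ, LensAux.integral_S_eq_iterated hθ,
      setIntegral_congr_fun measurableSet_Ioo
        (fun t ht => LensAux.inner_integral hθ ht),
      LensAux.outer_integral hθ]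
  refine ⟨h1, ?_⟩
  rw [h1, zeta1, Real.arcsin_sin (by linarith [hθ.1, Real.pi_pos]) hθ.2]
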